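/- Let A ∈ ℝ^{m×n}, α > 0, let M ∈ ℝ^{n×n} be symmetric with M − αAᵀA positive semidefinite, and let B be the positive semidefinite square root of (1/α)M − AᵀA. Then for every u ∈ ℝᵐ and every x, y ∈ ℝⁿ, setting x⁺ := x − M⁺Aᵀu (M⁺ the Moore–Penrose pseudoinverse), one has α⟨B(x⁺ − x), B(x⁺ − y)⟩ + α⟨A(x⁺ − x), A(x⁺ − y)⟩ + ⟨u, A(x⁺ − y)⟩ = 0. -/

import Mathlib

open Matrix

-- Moore–Penrose pseudoinverse, characterized by the four Penrose conditions
-- (which determine it uniquely when a solution exists).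
open Classical in
noncomputable def mpInv {k l : ℕ} (A : Matrix (Fin k) (Fin l) ℝ) : Matrix (Fin l) (Fin k) ℝ :=
  if h : ∃ X : Matrix (Fin l) (Fin k) ℝ,
      A * X * A = A ∧ X * A * X = X ∧ (A * X)ᵀ = A * X ∧ (X * A)ᵀ = X * A
  then h.choose else 0

lemma mp_exists {k : ℕ} {M : Matrix (Fin k) (Fin k) ℝ} (hM : M.IsHermitian) :
    ∃ X : Matrix (Fin k) (Fin k) ℝ,
      M * X * M = M ∧ X * M * X = X ∧ (M * X)ᵀ = M * X ∧ (X * M)ᵀ = X * M := by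
  set U : Matrix (Fin k) (Fin k) ℝ := (hM.eigenvectorUnitary : Matrix (Fin k) (Fin k) ℝ) with hU
  have hUU : star U * U = 1 := Unitary.coe_star_mul_self hM.eigenvectorUnitary
  have hcanc : ∀ X : Matrix (Fin k) (Fin k) ℝ, star U * (U * X) = X := fun X => by
    rw [← Matrix.mul_assoc, hUU, Matrix.one_mul]
  set e : Fin k → ℝ := hM.eigenvalues with he
  have hspec : M = U * diagonal e * star U := by
    simpa using hM.spectral_theorem
  have key : ∀ d₁ d₂ : Fin k → ℝ,
      (U * diagonal d₁ * star U) * (U * diagonal d₂ * star U) = U * diagonal (d₁ * d₂) * star U :=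
    fun d₁ d₂ => by
      simp only [Matrix.mul_assoc, hcanc]
      rw [← Matrix.mul_assoc (diagonal d₁), diagonal_mul_diagonal]; rfl
  have hinv : (e * (fun i => (e i)⁻¹) * e) = e := by
    ext i
    rcases eq_or_ne (e i) 0 with h | h <;>
      simp [Pi.mul_apply, h, mul_inv_cancel₀, inv_mul_cancel₀]
  have hinv2 : ((fun i => (e i)⁻¹) * e * fun i => (e i)⁻¹) = fun i => (e i)⁻¹ := by
    ext i
    rcases eq_or_ne (e i) 0 with h | h <;>
      simp [Pi.mul_apply, h, mul_inv_cancel₀, inv_mul_cancel₀]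
  have hsymm : ∀ d : Fin k → ℝ, (U * diagonal d * star U)ᵀ = U * diagonal d * star U := by
    intro d
    have : (U * diagonal d * star U).IsHermitian := by
      apply Matrix.isHermitian_mul_mul_conjTranspose
      exact isHermitian_diagonal d
    rwa [Matrix.IsHermitian, conjTranspose_eq_transpose_of_trivial] at this
  refine ⟨U * diagonal (fun i => (e i)⁻¹) * star U, ?_, ?_, ?_, ?_⟩
  · rw [hspec, key, key, hinv]
  · rw [hspec, key, key, hinv2]
  · rw [hspec, key]; exact hsymm _
  · rw [hspec, key]; exact hsymm _

theorem ncs_orthogonality_identity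
    {m n : ℕ}
    (A : Matrix (Fin m) (Fin n) ℝ)
    (α : ℝ) (hα : 0 < α)
    (M : Matrix (Fin n) (Fin n) ℝ) (hMsymm : Mᵀ = M)
    (hMpsd : (M - α • (Aᵀ * A)).PosSemidef)
    -- B is the positive semidefinite square root of (1/α)M − AᵀA:
    (B : Matrix (Fin n) (Fin n) ℝ) (hBpsd : B.PosSemidef)
    (hBsq : B * B = α⁻¹ • M - Aᵀ * A) :
    ∀ (u : Fin m → ℝ) (x y xp : Fin n → ℝ),
      xp = x - mpInv M *ᵥ (Aᵀ *ᵥ u) →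
      α * ((B *ᵥ (xp - x)) ⬝ᵥ (B *ᵥ (xp - y))) +
        α * ((A *ᵥ (xp - x)) ⬝ᵥ (A *ᵥ (xp - y))) +
        u ⬝ᵥ (A *ᵥ (xp - y)) = 0 := by
  intro u x y xp hxp
  have hMherm : M.IsHermitian := by
    rw [Matrix.IsHermitian, conjTranspose_eq_transpose_of_trivial, hMsymm]
  have hEx := mp_exists hMherm
  set X : Matrix (Fin n) (Fin n) ℝ := mpInv M with hXdef
  have hX : M * X * M = M ∧ X * M * X = X ∧ (M * X)ᵀ = M * X ∧ (X * M)ᵀ = X * M := by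
    rw [hXdef, mpInv, dif_pos hEx]
    exact hEx.choose_spec
  -- kernel of M is contained in kernel of A
  have hker : ∀ v : Fin n → ℝ, M *ᵥ v = 0 → A *ᵥ v = 0 := by
    intro v hv
    have h0 := hMpsd.dotProduct_mulVec_nonneg v
    rw [sub_mulVec] at h0
    have hstar : star v = v := rfl
    rw [hstar, hv, zero_sub, dotProduct_neg, smul_mulVec, dotProduct_smul,
      smul_eq_mul] at h0
    have hAv : v ⬝ᵥ ((Aᵀ * A) *ᵥ v) = (A *ᵥ v) ⬝ᵥ (A *ᵥ v) := by
      rw [← mulVec_mulVec, dotProduct_mulVec, vecMul_transpose]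
    rw [hAv] at h0
    have hnn : 0 ≤ (A *ᵥ v) ⬝ᵥ (A *ᵥ v) := Finset.sum_nonneg fun i _ => mul_self_nonneg _
    have h5 : (A *ᵥ v) ⬝ᵥ (A *ᵥ v) = 0 := by nlinarith
    exact dotProduct_self_eq_zero.mp h5
  -- matrix version of the kernel inclusion
  have hkerM : ∀ N : Matrix (Fin n) (Fin n) ℝ, M * N = 0 → A * N = 0 := by
    intro N hN
    ext i j
    have hcol : M *ᵥ (fun r => N r j) = 0 := by
      ext s
      have := congrFun (congrFun hN s) j
      simpa [Matrix.mul_apply, Matrix.mulVec, dotProduct] using this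
    have := congrFun (hker _ hcol) i
    simpa [Matrix.mul_apply, Matrix.mulVec, dotProduct] using this
  -- M * X * Aᵀ = Aᵀ
  have hMXA : M * X * Aᵀ = Aᵀ := by
    have h1 : M * Xᵀ * M = M := by
      have h := congrArg Matrix.transpose hX.1
      rw [Matrix.transpose_mul, Matrix.transpose_mul, hMsymm, ← Matrix.mul_assoc] at h
      exact h
    have h2 : M * (Xᵀ * M - 1) = 0 := by
      rw [Matrix.mul_sub, Matrix.mul_one, ← Matrix.mul_assoc, h1, sub_self]
    have h3 : A * (Xᵀ * M - 1) = 0 := hkerM _ h2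
    rw [Matrix.mul_sub, Matrix.mul_one, sub_eq_zero, ← Matrix.mul_assoc] at h3
    have h := congrArg Matrix.transpose h3.symm
    rw [Matrix.transpose_mul, Matrix.transpose_mul, Matrix.transpose_transpose, hMsymm,
      ← Matrix.mul_assoc] at h
    exact h.symm
  set z : Fin n → ℝ := X *ᵥ (Aᵀ *ᵥ u) with hz
  have hMz : M *ᵥ z = Aᵀ *ᵥ u := by
    rw [hz, mulVec_mulVec, mulVec_mulVec, hMXA]
  have hBsymm : Bᵀ = B := by
    have := hBpsd.1
    rwa [Matrix.IsHermitian, conjTranspose_eq_transpose_of_trivial] at this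
  have hdotB : ∀ a b : Fin n → ℝ, (B *ᵥ a) ⬝ᵥ (B *ᵥ b) = ((B * B) *ᵥ a) ⬝ᵥ b := by
    intro a b
    rw [dotProduct_mulVec, show (B *ᵥ a) ᵥ* B = (B * B) *ᵥ a from by
      rw [show (B *ᵥ a) ᵥ* B = Bᵀ *ᵥ (B *ᵥ a) from (Matrix.mulVec_transpose B _).symm,
        mulVec_mulVec, hBsymm]]
  have hdotA : ∀ a b : Fin n → ℝ, (A *ᵥ a) ⬝ᵥ (A *ᵥ b) = ((Aᵀ * A) *ᵥ a) ⬝ᵥ b := by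
    intro a b
    rw [dotProduct_mulVec, show (A *ᵥ a) ᵥ* A = (Aᵀ * A) *ᵥ a from by
      rw [← Matrix.mulVec_transpose, mulVec_mulVec]]
  have hdotu : u ⬝ᵥ (A *ᵥ (xp - y)) = (Aᵀ *ᵥ u) ⬝ᵥ (xp - y) := by
    rw [dotProduct_mulVec, ← mulVec_transpose]
  have hBB : α • (B * B) + α • (Aᵀ * A) = M := by
    rw [hBsq, smul_sub, smul_smul, mul_inv_cancel₀ (ne_of_gt hα), one_smul]
    abel
  have hxx : xp - x = -z := by rw [hxp]; abel
  have hkey : α * (((B * B) *ᵥ z) ⬝ᵥ (xp - y)) + α * (((Aᵀ * A) *ᵥ z) ⬝ᵥ (xp - y))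
      = (Aᵀ *ᵥ u) ⬝ᵥ (xp - y) := by
    have h := congrArg (fun C : Matrix (Fin n) (Fin n) ℝ => (C *ᵥ z) ⬝ᵥ (xp - y)) hBB
    simp only [add_mulVec, smul_mulVec, add_dotProduct, smul_dotProduct,
      smul_eq_mul] at h
    rw [hMz] at h
    exact h
  rw [hxx, hdotB, hdotA, hdotu, mulVec_neg, mulVec_neg, neg_dotProduct, neg_dotProduct]
  linarith [hkey]
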